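/- arXiv:2508.09421 — 4 statements merged into one kernel-verified Lean document; each statement's English description precedes it below -/
import Mathlib

section
/- Every ring automorphism of the polynomial ring ℤ[x,y,z] that fixes the polynomial x² + y² + z² − xyz − 2 belongs to the subgroup of automorphisms generated by the Vieta involution τ, the six coordinate permutations, and the double sign changes. (Cantat–Loray–Perepechko: the relative automorphism group of the SL₂-character variety of the once-punctured torus is generated by a single Vieta involution, S₃ permuting coordinates, and the double sign changes.) -/
open MvPolynomial

/-- The SL₂-character algebra of the once-punctured torus: `ℤ[x,y,z]`. -/
abbrev CharAlg : Type := MvPolynomial (Fin 3) ℤ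

/-- The boundary trace `x² + y² + z² − xyz − 2`. -/
noncomputable def boundaryTrace : CharAlg :=
  X 0 ^ 2 + X 1 ^ 2 + X 2 ^ 2 - X 0 * X 1 * X 2 - 2

/-- The Vieta involution `(x,y,z) ↦ (x, y, xy − z)`. -/
def IsVieta (φ : RingAut CharAlg) : Prop :=
  φ (X 0) = X 0 ∧ φ (X 1) = X 1 ∧ φ (X 2) = X 0 * X 1 - X 2

/-- A coordinate permutation of `x, y, z`. -/
def IsCoordPerm (φ : RingAut CharAlg) : Prop :=
  ∃ σ : Equiv.Perm (Fin 3), ∀ i, φ (X i) = X (σ i)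

/-- A double sign change `(x,y,z) ↦ (ε₁x, ε₂y, ε₃z)`, `εᵢ = ±1`, `ε₁ε₂ε₃ = 1`. -/
def IsDoubleSign (φ : RingAut CharAlg) : Prop :=
  ∃ ε : Fin 3 → ℤ, (∀ i, ε i = 1 ∨ ε i = -1) ∧ ε 0 * ε 1 * ε 2 = 1 ∧
    ∀ i, φ (X i) = C (ε i) * X i

namespace RelAutAux


variable {σ : Type*} {R : Type*} [CommRing R] [IsDomain R]

lemma deg_eq_sum (m : σ →₀ ℕ) : m.degree = m.sum fun _ e => e := rfl

lemma totalDegree_eq_sup_degree (p : MvPolynomial σ R) :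
    p.totalDegree = p.support.sup Finsupp.degree := rfl

lemma hc_top_ne_zero {p : MvPolynomial σ R} (hp : p ≠ 0) :
    homogeneousComponent p.totalDegree p ≠ 0 := by
  obtain ⟨m, hm, hm2⟩ := p.support.exists_mem_eq_sup
    (MvPolynomial.support_nonempty.mpr hp) Finsupp.degree
  intro h0
  have hcf := coeff_homogeneousComponent p.totalDegree p m
  rw [h0] at hcf
  rw [if_pos (by rw [totalDegree_eq_sup_degree, hm2])] at hcf
  exact (MvPolynomial.mem_support_iff.mp hm) hcf.symm

lemma coeff_zero_of_gt {p : MvPolynomial σ R} {m : σ →₀ ℕ}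
    (h : p.totalDegree < m.degree) : coeff m p = 0 := by
  apply coeff_eq_zero_of_totalDegree_lt
  simpa [Finsupp.degree_apply] using h

lemma degree_add' (a b : σ →₀ ℕ) : (a + b).degree = a.degree + b.degree := by
  simp only [deg_eq_sum]
  exact Finsupp.sum_add_index' (fun _ => rfl) (fun _ _ _ => rfl)

lemma hc_top_mul (p q : MvPolynomial σ R) :
    homogeneousComponent (p.totalDegree + q.totalDegree) (p * q)
      = homogeneousComponent p.totalDegree p * homogeneousComponent q.totalDegree q := by
  classical
  ext d
  rw [coeff_homogeneousComponent, coeff_mul, coeff_mul]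
  split_ifs with hd
  · apply Finset.sum_congr rfl
    intro x hx
    rw [Finset.HasAntidiagonal.mem_antidiagonal] at hx
    rw [coeff_homogeneousComponent, coeff_homogeneousComponent]
    have hsum : x.1.degree + x.2.degree = p.totalDegree + q.totalDegree := by
      rw [← hd, ← hx, degree_add']
    by_cases h1 : x.1.degree = p.totalDegree
    · have h2 : x.2.degree = q.totalDegree := by omega
      rw [if_pos h1, if_pos h2]
    · rw [if_neg h1]
      rcases Nat.lt_or_ge p.totalDegree x.1.degree with hgt | hle
      · rw [coeff_zero_of_gt hgt, zero_mul, zero_mul]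
      · have h2 : q.totalDegree < x.2.degree := by omega
        rw [coeff_zero_of_gt h2, mul_zero, zero_mul]
  · symm
    apply Finset.sum_eq_zero
    intro x hx
    rw [Finset.HasAntidiagonal.mem_antidiagonal] at hx
    rw [coeff_homogeneousComponent, coeff_homogeneousComponent]
    have hsum : x.1.degree + x.2.degree = d.degree := by rw [← hx, degree_add']
    by_cases h1 : x.1.degree = p.totalDegree
    · rw [if_pos h1]
      by_cases h2 : x.2.degree = q.totalDegree
      · omega
      · rw [if_neg h2, mul_zero]
    · rw [if_neg h1, zero_mul]

lemma totalDegree_mul_eq {p q : MvPolynomial σ R} (hp : p ≠ 0) (hq : q ≠ 0) :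
    (p * q).totalDegree = p.totalDegree + q.totalDegree := by
  refine le_antisymm (totalDegree_mul p q) ?_
  have hne : homogeneousComponent (p.totalDegree + q.totalDegree) (p * q) ≠ 0 := by
    rw [hc_top_mul]
    exact mul_ne_zero (hc_top_ne_zero hp) (hc_top_ne_zero hq)
  by_contra hlt
  push_neg at hlt
  exact hne (homogeneousComponent_eq_zero _ _ hlt)



/-- involutive substitution automorphism -/
noncomputable def mkInvol (v : Fin 3 → CharAlg) (h : ∀ i, aeval v (v i) = X i) :
    RingAut CharAlg :=
  RingEquiv.ofRingHom ((aeval v).toRingHom : CharAlg →+* CharAlg) (aeval v).toRingHom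
    (by apply MvPolynomial.ringHom_ext
        · intro r; simp
        · intro i; simp only [RingHom.coe_comp, Function.comp_apply,
            AlgHom.toRingHom_eq_coe, RingHom.coe_coe, aeval_X, RingHom.id_apply]
          exact h i)
    (by apply MvPolynomial.ringHom_ext
        · intro r; simp
        · intro i; simp only [RingHom.coe_comp, Function.comp_apply,
            AlgHom.toRingHom_eq_coe, RingHom.coe_coe, aeval_X, RingHom.id_apply]
          exact h i)

@[simp] lemma mkInvol_apply (v : Fin 3 → CharAlg) (h : ∀ i, aeval v (v i) = X i)
    (t : CharAlg) : mkInvol v h t = aeval v t := rfl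

noncomputable def vieta : RingAut CharAlg :=
  mkInvol ![X 0, X 1, X 0 * X 1 - X 2] (by
    intro i
    fin_cases i <;> simp)

lemma isVieta_vieta : IsVieta vieta := by
  refine ⟨?_, ?_, ?_⟩ <;> simp [vieta]

lemma vieta_bt : vieta boundaryTrace = boundaryTrace := by
  simp only [boundaryTrace, vieta, mkInvol_apply, map_sub, map_add, map_mul, map_pow,
    map_ofNat, aeval_X]
  simp only [Matrix.cons_val_zero, Matrix.cons_val_one, Matrix.head_cons,
    Matrix.cons_val_two, Matrix.tail_cons]
  ring

/-- coordinate permutation automorphism -/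
noncomputable def coordPerm (σ : Equiv.Perm (Fin 3)) : RingAut CharAlg :=
  (renameEquiv ℤ σ).toRingEquiv

lemma isCoordPerm_coordPerm (σ : Equiv.Perm (Fin 3)) : IsCoordPerm (coordPerm σ) :=
  ⟨σ, fun i => by simp [coordPerm]⟩

lemma coordPerm_apply (σ : Equiv.Perm (Fin 3)) (t : CharAlg) :
    coordPerm σ t = rename σ t := rfl

lemma coordPerm_bt (σ : Equiv.Perm (Fin 3)) :
    coordPerm σ boundaryTrace = boundaryTrace := by
  rw [coordPerm_apply]
  apply MvPolynomial.funext
  intro v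
  rw [eval_rename]
  have hs : ∑ i, ((v ∘ σ) i)^2 = ∑ i, (v i)^2 := Equiv.sum_comp σ (fun i => (v i)^2)
  have hp : ∏ i, (v ∘ σ) i = ∏ i, v i := Equiv.prod_comp σ v
  rw [Fin.sum_univ_three, Fin.sum_univ_three] at hs
  rw [Fin.prod_univ_three, Fin.prod_univ_three] at hp
  simp only [boundaryTrace, map_sub, map_add, map_mul, map_pow, map_ofNat, eval_X,
    Function.comp_apply] at *
  omega

/-- sign change automorphism -/
noncomputable def signAut (ε : Fin 3 → ℤ) (hε : ∀ i, ε i = 1 ∨ ε i = -1) :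
    RingAut CharAlg :=
  mkInvol (fun i => C (ε i) * X i) (by
    intro i
    have h2 : ε i * ε i = 1 := by rcases hε i with h | h <;> rw [h] <;> norm_num
    simp only [map_mul, aeval_C, aeval_X, map_intCast, ← mul_assoc, algebraMap_int_eq,
      eq_intCast]
    have : ((ε i : CharAlg)) * (ε i : CharAlg) = ((ε i * ε i : ℤ) : CharAlg) := by push_cast; ring
    rw [this, h2]
    simp)

lemma signAut_apply_X (ε : Fin 3 → ℤ) (hε : ∀ i, ε i = 1 ∨ ε i = -1) (i : Fin 3) :
    signAut ε hε (X i) = C (ε i) * X i := by simp [signAut]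

lemma isDoubleSign_signAut (ε : Fin 3 → ℤ) (hε : ∀ i, ε i = 1 ∨ ε i = -1)
    (hprod : ε 0 * ε 1 * ε 2 = 1) : IsDoubleSign (signAut ε hε) :=
  ⟨ε, hε, hprod, fun i => signAut_apply_X ε hε i⟩



lemma X_ne_C (i : Fin 3) (k : ℤ) : (X i : CharAlg) ≠ C k := by
  intro h
  have h2 := congrArg totalDegree h
  rw [totalDegree_X, totalDegree_C] at h2
  exact one_ne_zero h2

lemma phi_ne_zero (φ : RingAut CharAlg) (t : CharAlg) (ht : t ≠ 0) : φ t ≠ 0 := by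
  intro h0
  exact ht (φ.injective (h0.trans (map_zero φ).symm))

lemma phi_C (φ : RingAut CharAlg) (k : ℤ) : φ (C k) = C k := by
  have h1 : (C k : CharAlg) = (k : CharAlg) := by simp
  rw [h1, map_intCast]

lemma eq_C_of_deg_zero {p : CharAlg} (h : p.totalDegree = 0) : p = C (coeff 0 p) := by
  have hs := sum_homogeneousComponent p
  rw [h] at hs
  simpa using hs.symm

lemma phi_X_deg_pos (φ : RingAut CharAlg) (i : Fin 3) : 1 ≤ (φ (X i)).totalDegree := by
  by_contra hlt
  push_neg at hlt
  have h0 : (φ (X i)).totalDegree = 0 := by omega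
  have h1 := eq_C_of_deg_zero h0
  have h2 : X i = φ.symm (C (coeff 0 (φ (X i)))) := by
    rw [← h1]; simp
  have h3 : φ.symm (C (coeff 0 (φ (X i)))) = C (coeff 0 (φ (X i))) := phi_C φ.symm _
  exact X_ne_C i _ (h2.trans h3)

lemma two_eq_C : ((2:CharAlg)) = C 2 := by norm_num

lemma bt_deg : (boundaryTrace : CharAlg).totalDegree ≤ 3 := by
  have hX : ∀ (i : Fin 3) (n : ℕ), ((X i ^ n : CharAlg)).totalDegree ≤ n := fun i n =>
    (totalDegree_pow _ _).trans (by simp)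
  have h2 : ((2:CharAlg)).totalDegree ≤ 3 := by rw [two_eq_C, totalDegree_C]; omega
  have hxyz : ((X 0 * X 1 * X 2 : CharAlg)).totalDegree ≤ 3 := by
    refine (totalDegree_mul _ _).trans ?_
    have := (totalDegree_mul (X 0 : CharAlg) (X 1))
    simp only [totalDegree_X] at *
    omega
  refine (totalDegree_sub _ _).trans (max_le ((totalDegree_sub _ _).trans (max_le ((totalDegree_add _ _).trans (max_le ((totalDegree_add _ _).trans (max_le ?_ ?_)) ?_)) hxyz)) h2) <;>
    exact (hX _ 2).trans (by omega)

lemma descent {p q r : CharAlg} (hp : p ≠ 0) (hq : q ≠ 0) (hr : r ≠ 0)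
    (hs : p * q - r ≠ 0)
    (ha : 1 ≤ p.totalDegree) (hb : 1 ≤ q.totalDegree)
    (hmax1 : p.totalDegree ≤ r.totalDegree) (hmax2 : q.totalDegree ≤ r.totalDegree)
    (hc2 : 2 ≤ r.totalDegree)
    (hE : p^2 + q^2 + r^2 - p*q*r - 2 = boundaryTrace) :
    (p * q - r).totalDegree < r.totalDegree := by
  set a := p.totalDegree with hadef
  set b := q.totalDegree with hbdef
  set c := r.totalDegree with hcdef
  have hqr : q * r ≠ 0 := mul_ne_zero hq hr
  have e1 : p * (q * r) = p^2 + q^2 + r^2 - 2 - boundaryTrace := by linear_combination -hE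
  have d1 : a + (b + c) = (p^2+q^2+r^2-2-boundaryTrace).totalDegree := by
    rw [← e1, totalDegree_mul_eq hp hqr, totalDegree_mul_eq hq hr]
  have dsq : ∀ t : CharAlg, t ≠ 0 → (t^2).totalDegree = 2 * t.totalDegree := by
    intro t ht
    rw [pow_two, totalDegree_mul_eq ht ht]; ring
  have hb2 : ((2:CharAlg)).totalDegree = 0 := by rw [two_eq_C, totalDegree_C]
  have hle1 : (p^2+q^2+r^2-2-boundaryTrace).totalDegree ≤ 2*c := by
    have h1 : (p^2).totalDegree ≤ 2*c := by rw [dsq p hp]; omega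
    have h2 : (q^2).totalDegree ≤ 2*c := by rw [dsq q hq]; omega
    have h3 : (r^2).totalDegree ≤ 2*c := by rw [dsq r hr]
    have h4 : ((2:CharAlg)).totalDegree ≤ 2*c := by rw [hb2]; omega
    have h5 : boundaryTrace.totalDegree ≤ 2*c := le_trans bt_deg (by omega)
    exact (totalDegree_sub _ _).trans (max_le ((totalDegree_sub _ _).trans (max_le ((totalDegree_add _ _).trans (max_le ((totalDegree_add _ _).trans (max_le h1 h2)) h3)) h4)) h5)
  have key : a + b ≤ c := by
    rw [← d1] at hle1; omega
  have e2 : r * (p*q - r) = p^2 + q^2 - 2 - boundaryTrace := by linear_combination -hE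
  have d3 : c + (p*q-r).totalDegree = (p^2+q^2-2-boundaryTrace).totalDegree := by
    rw [← e2, totalDegree_mul_eq hr hs]
  have hle2 : (p^2+q^2-2-boundaryTrace).totalDegree ≤ 2*c - 1 := by
    have h1 : (p^2).totalDegree ≤ 2*c-1 := by rw [dsq p hp]; omega
    have h2 : (q^2).totalDegree ≤ 2*c-1 := by rw [dsq q hq]; omega
    have h4 : ((2:CharAlg)).totalDegree ≤ 2*c-1 := by rw [hb2]; omega
    have h5 : boundaryTrace.totalDegree ≤ 2*c-1 := le_trans bt_deg (by omega)
    exact (totalDegree_sub _ _).trans (max_le ((totalDegree_sub _ _).trans (max_le ((totalDegree_add _ _).trans (max_le h1 h2)) h4)) h5)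
  omega



lemma mon_cases (m : Fin 3 →₀ ℕ) :
    m = 0 ∨ (∃ i, m = Finsupp.single i 1) ∨ 2 ≤ m.degree := by
  classical
  have hdeg : m.degree = m 0 + m 1 + m 2 := by
    rw [Finsupp.degree_apply, Finset.sum_subset (Finset.subset_univ _)]
    · rw [Fin.sum_univ_three]
    · intro x _ hx
      exact Finsupp.notMem_support_iff.mp hx
  by_cases h2 : 2 ≤ m.degree
  · exact Or.inr (Or.inr h2)
  rcases Nat.lt_or_ge (m 0 + m 1 + m 2) 1 with h | h
  · left
    ext j
    fin_cases j <;> simp <;> omega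
  · right; left
    have h1 : m 0 + m 1 + m 2 = 1 := by omega
    by_cases h0 : m 0 = 1
    · exact ⟨0, by ext j; fin_cases j <;> simp [Finsupp.single_apply] <;> omega⟩
    by_cases hh1 : m 1 = 1
    · exact ⟨1, by ext j; fin_cases j <;> simp [Finsupp.single_apply] <;> omega⟩
    · exact ⟨2, by ext j; fin_cases j <;> simp [Finsupp.single_apply] <;> omega⟩

lemma dec1 {p : CharAlg} (h : p.totalDegree ≤ 1) :
    p = C (coeff 0 p) + (C (coeff (Finsupp.single 0 1) p) * X 0
      + C (coeff (Finsupp.single 1 1) p) * X 1 + C (coeff (Finsupp.single 2 1) p) * X 2) := by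
  classical
  ext m
  have hC : ∀ (a : ℤ) (m : Fin 3 →₀ ℕ), coeff m (C a : CharAlg) = if m = 0 then a else 0 := by
    intro a m
    rw [coeff_C]
    by_cases h0 : m = 0
    · simp [h0]
    · rw [if_neg (fun hh => h0 hh.symm), if_neg h0]
  have hCX : ∀ (a : ℤ) (i : Fin 3) (m : Fin 3 →₀ ℕ),
      coeff m (C a * X i : CharAlg) = if m = Finsupp.single i 1 then a else 0 := by
    intro a i m
    rw [coeff_C_mul, coeff_X']
    by_cases h0 : Finsupp.single i 1 = m
    · simp [h0]
    · rw [if_neg h0, if_neg (fun hh => h0 hh.symm), mul_zero]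
  simp only [coeff_add, hC, hCX]
  rcases mon_cases m with h0 | ⟨i, hi⟩ | h2
  · subst h0
    have hz : ∀ i : Fin 3, (0 : Fin 3 →₀ ℕ) = Finsupp.single i 1 → False := by
      intro i hh
      exact one_ne_zero (Finsupp.single_eq_zero.mp hh.symm)
    rw [if_pos rfl, if_neg (hz 0), if_neg (hz 1), if_neg (hz 2)]
    simp
  · subst hi
    have hne : ∀ i j : Fin 3, i ≠ j → Finsupp.single i 1 ≠ Finsupp.single j (1:ℕ) := by
      intro i j hij hs
      rcases (Finsupp.single_eq_single_iff _ _ _ _).mp hs with ⟨h,_⟩ | ⟨h,_⟩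
      · exact hij h
      · exact one_ne_zero h
    fin_cases i <;>
      simp [Finsupp.single_eq_zero, hne 0 1 (by decide), hne 0 2 (by decide),
        hne 1 0 (by decide), hne 1 2 (by decide), hne 2 0 (by decide), hne 2 1 (by decide)]
  · have hz : coeff m p = 0 := by
      apply coeff_eq_zero_of_totalDegree_lt
      have : m.degree = ∑ i ∈ m.support, m i := rfl
      omega
    have hm0 : m ≠ 0 := by
      intro h0; rw [h0] at h2; simp [Finsupp.degree] at h2
    have hms : ∀ i : Fin 3, m ≠ Finsupp.single i 1 := by
      intro i hi
      rw [hi] at h2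
      have : (Finsupp.single i 1 : Fin 3 →₀ ℕ).degree = 1 := by
        simp [Finsupp.degree_apply, Finsupp.support_single_ne_zero i one_ne_zero]
      omega
    rw [hz, if_neg hm0, if_neg (hms 0), if_neg (hms 1), if_neg (hms 2)]
    simp



lemma Ederiv (φ : RingAut CharAlg) (h : φ boundaryTrace = boundaryTrace) :
    (φ (X 0))^2 + (φ (X 1))^2 + (φ (X 2))^2 - (φ (X 0))*(φ (X 1))*(φ (X 2)) - 2
      = boundaryTrace := by
  rw [← h]
  simp only [boundaryTrace, map_sub, map_add, map_pow, map_mul, map_ofNat]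

lemma const_zero (u v w a b c : ℤ) (hu : u = 1 ∨ u = -1) (hv : v = 1 ∨ v = -1)
    (hw : w = 1 ∨ w = -1)
    (h : ∀ s t r : ℤ, (a+u*s)^2+(b+v*t)^2+(c+w*r)^2 - (a+u*s)*(b+v*t)*(c+w*r) - 2
        = s^2+t^2+r^2 - s*t*r - 2) :
    a = 0 ∧ b = 0 ∧ c = 0 := by
  have hu2 : u^2 = 1 := by rcases hu with h' | h' <;> rw [h'] <;> norm_num
  have hv2 : v^2 = 1 := by rcases hv with h' | h' <;> rw [h'] <;> norm_num
  have hw2 : w^2 = 1 := by rcases hw with h' | h' <;> rw [h'] <;> norm_num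
  have k0 := h 0 0 0
  have k1 := h 1 0 0
  have k2 := h (-1) 0 0
  have k3 := h 0 1 0
  have k4 := h 0 (-1) 0
  have k5 := h 0 0 1
  have k6 := h 0 0 (-1)
  have e0 : a^2 + b^2 + c^2 = a*b*c := by linear_combination k0
  have e1' : 4*a = 2*(b*c) := by
    linear_combination u*k1 - u*k2 - (4*a - 2*(b*c))*hu2
  have e2' : 4*b = 2*(a*c) := by
    linear_combination v*k3 - v*k4 - (4*b - 2*(a*c))*hv2
  have e3' : 4*c = 2*(a*b) := by
    linear_combination w*k5 - w*k6 - (4*c - 2*(a*b))*hw2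
  have q1 : 4*a^2 = 2*(a^2+b^2+c^2) := by linear_combination a*e1' - 2*e0
  have q2 : 4*b^2 = 2*(a^2+b^2+c^2) := by linear_combination b*e2' - 2*e0
  have q3 : 4*c^2 = 2*(a^2+b^2+c^2) := by linear_combination c*e3' - 2*e0
  have ha2 : a^2 = 0 := by linarith
  have hb2 : b^2 = 0 := by linarith
  have hc2 : c^2 = 0 := by linarith
  exact ⟨pow_eq_zero_iff two_ne_zero |>.mp ha2, pow_eq_zero_iff two_ne_zero |>.mp hb2,
    pow_eq_zero_iff two_ne_zero |>.mp hc2⟩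

lemma goodCase (φ : RingAut CharAlg) (i0 i1 i2 : Fin 3)
    (h01 : i0 ≠ i1) (h02 : i0 ≠ i2) (h12 : i1 ≠ i2)
    (u v w a0 b0 c0 : ℤ)
    (hφ0 : φ (X 0) = C a0 + C u * X i0)
    (hφ1 : φ (X 1) = C b0 + C v * X i1)
    (hφ2 : φ (X 2) = C c0 + C w * X i2)
    (huvw : u * v * w = 1)
    (hE : φ boundaryTrace = boundaryTrace) :
    ∃ (σ : Equiv.Perm (Fin 3)) (e : Fin 3 → ℤ), (∀ i, e i = 1 ∨ e i = -1) ∧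
      e 0 * e 1 * e 2 = 1 ∧ ∀ i, φ (X i) = C (e i) * X (σ i) := by
  have hu : u = 1 ∨ u = -1 :=
    Int.isUnit_iff.mp (IsUnit.of_mul_eq_one (v*w) (by linear_combination huvw))
  have hv : v = 1 ∨ v = -1 :=
    Int.isUnit_iff.mp (IsUnit.of_mul_eq_one (u*w) (by linear_combination huvw))
  have hw : w = 1 ∨ w = -1 :=
    Int.isUnit_iff.mp (IsUnit.of_mul_eq_one (u*v) (by linear_combination huvw))
  have hbij : Function.Bijective (fun j : Fin 3 => ![i0,i1,i2] j) := by
    rw [← Finite.injective_iff_bijective]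
    intro x y hxy
    fin_cases x <;> fin_cases y <;> simp_all [eq_comm]
  set σ : Equiv.Perm (Fin 3) := Equiv.ofBijective _ hbij with hσ
  have hσ0 : σ 0 = i0 := rfl
  have hσ1 : σ 1 = i1 := rfl
  have hσ2 : σ 2 = i2 := rfl
  have hE' := Ederiv φ hE
  rw [hφ0, hφ1, hφ2] at hE'
  have htr : ∀ s t r : ℤ, (a0+u*s)^2+(b0+v*t)^2+(c0+w*r)^2
      - (a0+u*s)*(b0+v*t)*(c0+w*r) - 2 = s^2+t^2+r^2 - s*t*r - 2 := by
    intro s t r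
    set vv : Fin 3 → ℤ := fun j => if j = i0 then s else if j = i1 then t else r with hvv
    have hv0 : vv i0 = s := by simp [hvv]
    have hv1 : vv i1 = t := by
      rw [hvv]; dsimp only; rw [if_neg (Ne.symm h01), if_pos rfl]
    have hv2 : vv i2 = r := by
      rw [hvv]; dsimp only; rw [if_neg (Ne.symm h02), if_neg (Ne.symm h12)]
    have h1 := congrArg (eval vv) hE'
    simp only [map_add, map_sub, map_mul, map_pow, eval_C, eval_X, map_ofNat,
      boundaryTrace] at h1
    rw [hv0, hv1, hv2] at h1
    have hs : vv 0^2 + vv 1^2 + vv 2^2 = s^2+t^2+r^2 := by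
      have hq := Equiv.sum_comp σ (fun j => vv j ^ 2)
      rw [Fin.sum_univ_three, Fin.sum_univ_three] at hq
      rw [hσ0, hσ1, hσ2, hv0, hv1, hv2] at hq
      linarith
    have hp : vv 0 * vv 1 * vv 2 = s * t * r := by
      have hq := Equiv.prod_comp σ vv
      rw [Fin.prod_univ_three, Fin.prod_univ_three] at hq
      rw [hσ0, hσ1, hσ2, hv0, hv1, hv2] at hq
      linarith
    linear_combination h1 + hs - hp
  obtain ⟨ha0, hb0, hc0⟩ := const_zero u v w a0 b0 c0 hu hv hw htr
  subst ha0; subst hb0; subst hc0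
  refine ⟨σ, ![u,v,w], ?_, ?_, ?_⟩
  · intro i; fin_cases i <;> simpa using by assumption
  · simpa using huvw
  · intro i
    fin_cases i
    · show φ (X 0) = C (![u,v,w] 0) * X (σ 0)
      rw [hφ0, hσ0]; simp
    · show φ (X 1) = C (![u,v,w] 1) * X (σ 1)
      rw [hφ1, hσ1]; simp
    · show φ (X 2) = C (![u,v,w] 2) * X (σ 2)
      rw [hφ2, hσ2]; simp

noncomputable def Lf (f : Fin 3 → ℤ) : CharAlg :=
  C (f 0) * X 0 + C (f 1) * X 1 + C (f 2) * X 2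

lemma Lf_eq0 {f : Fin 3 → ℤ} (h1 : f 1 = 0) (h2 : f 2 = 0) : Lf f = C (f 0) * X 0 := by
  rw [Lf, h1, h2]; simp

lemma Lf_eq1 {f : Fin 3 → ℤ} (h1 : f 0 = 0) (h2 : f 2 = 0) : Lf f = C (f 1) * X 1 := by
  rw [Lf, h1, h2]; simp

lemma Lf_eq2 {f : Fin 3 → ℤ} (h1 : f 0 = 0) (h2 : f 1 = 0) : Lf f = C (f 2) * X 2 := by
  rw [Lf, h1, h2]; simp

lemma Lf_zero {f : Fin 3 → ℤ} (h0 : f 0 = 0) (h1 : f 1 = 0) (h2 : f 2 = 0) : Lf f = 0 := by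
  rw [Lf, h0, h1, h2]; simp

lemma coeff_single_CX (a : ℤ) (k j : Fin 3) :
    coeff (Finsupp.single j 1) (C a * X k : CharAlg) = if k = j then a else 0 := by
  classical
  rw [coeff_C_mul, coeff_X']
  by_cases h : k = j
  · subst h; simp
  · rw [if_neg h, if_neg, mul_zero]
    intro hs
    rcases (Finsupp.single_eq_single_iff _ _ _ _).mp hs with ⟨h',_⟩ | ⟨h',_⟩
    · exact h h'
    · exact one_ne_zero h'

noncomputable def gk0 : CharAlg →ₐ[ℤ] CharAlg := aeval ![0, X 1, X 2]
noncomputable def gk1 : CharAlg →ₐ[ℤ] CharAlg := aeval ![X 0, 0, X 2]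
noncomputable def gk2 : CharAlg →ₐ[ℤ] CharAlg := aeval ![X 0, X 1, 0]

lemma gk0L (f : Fin 3 → ℤ) : gk0 (Lf f) = C (f 1) * X 1 + C (f 2) * X 2 := by
  simp [gk0, Lf, algebraMap_eq]

lemma gk1L (f : Fin 3 → ℤ) : gk1 (Lf f) = C (f 0) * X 0 + C (f 2) * X 2 := by
  simp [gk1, Lf, algebraMap_eq]

lemma gk2L (f : Fin 3 → ℤ) : gk2 (Lf f) = C (f 0) * X 0 + C (f 1) * X 1 := by
  simp [gk2, Lf, algebraMap_eq]

lemma kill0 {f : Fin 3 → ℤ} (h : gk0 (Lf f) = 0) : f 1 = 0 ∧ f 2 = 0 := by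
  rw [gk0L] at h
  constructor
  · have h2 := congrArg (coeff (Finsupp.single 1 1)) h
    rwa [coeff_add, coeff_single_CX, coeff_single_CX, if_pos rfl, if_neg (by decide),
      add_zero, coeff_zero] at h2
  · have h2 := congrArg (coeff (Finsupp.single 2 1)) h
    rwa [coeff_add, coeff_single_CX, coeff_single_CX, if_neg (by decide), if_pos rfl,
      zero_add, coeff_zero] at h2

lemma kill1 {f : Fin 3 → ℤ} (h : gk1 (Lf f) = 0) : f 0 = 0 ∧ f 2 = 0 := by
  rw [gk1L] at h
  constructor
  · have h2 := congrArg (coeff (Finsupp.single 0 1)) h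
    rwa [coeff_add, coeff_single_CX, coeff_single_CX, if_pos rfl, if_neg (by decide),
      add_zero, coeff_zero] at h2
  · have h2 := congrArg (coeff (Finsupp.single 2 1)) h
    rwa [coeff_add, coeff_single_CX, coeff_single_CX, if_neg (by decide), if_pos rfl,
      zero_add, coeff_zero] at h2

lemma kill2 {f : Fin 3 → ℤ} (h : gk2 (Lf f) = 0) : f 0 = 0 ∧ f 1 = 0 := by
  rw [gk2L] at h
  constructor
  · have h2 := congrArg (coeff (Finsupp.single 0 1)) h
    rwa [coeff_add, coeff_single_CX, coeff_single_CX, if_pos rfl, if_neg (by decide),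
      add_zero, coeff_zero] at h2
  · have h2 := congrArg (coeff (Finsupp.single 1 1)) h
    rwa [coeff_add, coeff_single_CX, coeff_single_CX, if_neg (by decide), if_pos rfl,
      zero_add, coeff_zero] at h2

lemma base (φ : RingAut CharAlg) (hbt : φ boundaryTrace = boundaryTrace)
    (hd : ∀ i, (φ (X i)).totalDegree ≤ 1) :
    ∃ (σ : Equiv.Perm (Fin 3)) (e : Fin 3 → ℤ), (∀ i, e i = 1 ∨ e i = -1) ∧
      e 0 * e 1 * e 2 = 1 ∧ ∀ i, φ (X i) = C (e i) * X (σ i) := by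
  have hE' := Ederiv φ hbt
  set a0 := coeff 0 (φ (X 0)) with ha0
  set b0 := coeff 0 (φ (X 1)) with hb0
  set c0 := coeff 0 (φ (X 2)) with hc0
  set fa : Fin 3 → ℤ := fun j => coeff (Finsupp.single j 1) (φ (X 0)) with hfa
  set fb : Fin 3 → ℤ := fun j => coeff (Finsupp.single j 1) (φ (X 1)) with hfb
  set fc : Fin 3 → ℤ := fun j => coeff (Finsupp.single j 1) (φ (X 2)) with hfc
  have hp0 : φ (X 0) = C a0 + Lf fa := dec1 (hd 0)
  have hp1 : φ (X 1) = C b0 + Lf fb := dec1 (hd 1)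
  have hp2 : φ (X 2) = C c0 + Lf fc := dec1 (hd 2)
  rw [hp0, hp1, hp2] at hE'
  have hev : ∀ x y z : ℤ,
      (a0 + (fa 0 * x + fa 1 * y + fa 2 * z))^2 + (b0 + (fb 0 * x + fb 1 * y + fb 2 * z))^2
      + (c0 + (fc 0 * x + fc 1 * y + fc 2 * z))^2
      - (a0 + (fa 0 * x + fa 1 * y + fa 2 * z)) * (b0 + (fb 0 * x + fb 1 * y + fb 2 * z))
        * (c0 + (fc 0 * x + fc 1 * y + fc 2 * z)) - 2
      = x^2 + y^2 + z^2 - x*y*z - 2 := by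
    intro x y z
    have h1 := congrArg (eval ![x,y,z]) hE'
    simp only [Lf, boundaryTrace, map_add, map_sub, map_mul, map_pow, eval_C, eval_X,
      map_ofNat, Matrix.cons_val_zero, Matrix.cons_val_one, Matrix.head_cons,
      Matrix.cons_val_two, Matrix.tail_cons] at h1
    linear_combination h1
  have hc3 : ∀ x y z : ℤ,
      (fa 0 * x + fa 1 * y + fa 2 * z) * (fb 0 * x + fb 1 * y + fb 2 * z)
        * (fc 0 * x + fc 1 * y + fc 2 * z) = x*y*z := by
    intro x y z
    have h12 : (12:ℤ) * ((fa 0 * x + fa 1 * y + fa 2 * z) * (fb 0 * x + fb 1 * y + fb 2 * z)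
        * (fc 0 * x + fc 1 * y + fc 2 * z)) = 12 * (x*y*z) := by
      linear_combination - hev (2*x) (2*y) (2*z) + hev (-(2*x)) (-(2*y)) (-(2*z))
        + 2 * hev x y z - 2 * hev (-x) (-y) (-z)
    exact mul_left_cancel₀ (by norm_num) h12
  have hcubep : Lf fa * Lf fb * Lf fc = X 0 * X 1 * X 2 := by
    apply MvPolynomial.funext
    intro v
    have h1 := hc3 (v 0) (v 1) (v 2)
    simp only [Lf, map_add, map_mul, eval_C, eval_X]
    linear_combination h1
  have hXne : (X 0 * X 1 * X 2 : CharAlg) ≠ 0 := by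
    intro h
    have h1 := congrArg (eval (fun _ => (1:ℤ))) h
    simp at h1
  have hx0 : gk0 (Lf fa) = 0 ∨ gk0 (Lf fb) = 0 ∨ gk0 (Lf fc) = 0 := by
    have h : gk0 (Lf fa) * gk0 (Lf fb) * gk0 (Lf fc) = 0 := by
      rw [← map_mul, ← map_mul, hcubep]
      simp [gk0]
    rcases mul_eq_zero.mp h with h' | h'
    · rcases mul_eq_zero.mp h' with h'' | h''
      exacts [Or.inl h'', Or.inr (Or.inl h'')]
    · exact Or.inr (Or.inr h')
  have hx1 : gk1 (Lf fa) = 0 ∨ gk1 (Lf fb) = 0 ∨ gk1 (Lf fc) = 0 := by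
    have h : gk1 (Lf fa) * gk1 (Lf fb) * gk1 (Lf fc) = 0 := by
      rw [← map_mul, ← map_mul, hcubep]
      simp [gk1]
    rcases mul_eq_zero.mp h with h' | h'
    · rcases mul_eq_zero.mp h' with h'' | h''
      exacts [Or.inl h'', Or.inr (Or.inl h'')]
    · exact Or.inr (Or.inr h')
  have hx2 : gk2 (Lf fa) = 0 ∨ gk2 (Lf fb) = 0 ∨ gk2 (Lf fc) = 0 := by
    have h : gk2 (Lf fa) * gk2 (Lf fb) * gk2 (Lf fc) = 0 := by
      rw [← map_mul, ← map_mul, hcubep]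
      simp [gk2]
    rcases mul_eq_zero.mp h with h' | h'
    · rcases mul_eq_zero.mp h' with h'' | h''
      exacts [Or.inl h'', Or.inr (Or.inl h'')]
    · exact Or.inr (Or.inr h')
  clear hev hE'
  rcases hx0 with k0 | k0 | k0 <;> rcases hx1 with k1 | k1 | k1 <;> rcases hx2 with k2 | k2 | k2
  · obtain ⟨z1, z2⟩ := kill0 k0
    obtain ⟨z3, z4⟩ := kill1 k1
    exact absurd (by rw [← hcubep, Lf_zero z3 z1 z4]; ring) hXne
  · obtain ⟨z1, z2⟩ := kill0 k0
    obtain ⟨z3, z4⟩ := kill1 k1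
    exact absurd (by rw [← hcubep, Lf_zero z3 z1 z4]; ring) hXne
  · obtain ⟨z1, z2⟩ := kill0 k0
    obtain ⟨z3, z4⟩ := kill1 k1
    exact absurd (by rw [← hcubep, Lf_zero z3 z1 z4]; ring) hXne
  · obtain ⟨z1, z2⟩ := kill0 k0
    obtain ⟨z3, z4⟩ := kill2 k2
    exact absurd (by rw [← hcubep, Lf_zero z3 z4 z2]; ring) hXne
  · obtain ⟨z1, z2⟩ := kill1 k1
    obtain ⟨z3, z4⟩ := kill2 k2
    exact absurd (by rw [← hcubep, Lf_zero z3 z4 z2]; ring) hXne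
  · obtain ⟨za1, za2⟩ := kill0 k0
    obtain ⟨zb1, zb2⟩ := kill1 k1
    obtain ⟨zc1, zc2⟩ := kill2 k2
    refine goodCase φ 0 1 2 (by decide) (by decide) (by decide)
      (fa 0) (fb 1) (fc 2) a0 b0 c0 ?_ ?_ ?_ ?_ hbt
    · rw [hp0, Lf_eq0 za1 za2]
    · rw [hp1, Lf_eq1 zb1 zb2]
    · rw [hp2, Lf_eq2 zc1 zc2]
    · have h111 := hc3 1 1 1
      rw [za1, za2, zb1, zb2, zc1, zc2] at h111
      linear_combination h111
  · obtain ⟨z1, z2⟩ := kill0 k0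
    obtain ⟨z3, z4⟩ := kill2 k2
    exact absurd (by rw [← hcubep, Lf_zero z3 z4 z2]; ring) hXne
  · obtain ⟨za1, za2⟩ := kill0 k0
    obtain ⟨zb1, zb2⟩ := kill2 k2
    obtain ⟨zc1, zc2⟩ := kill1 k1
    refine goodCase φ 0 2 1 (by decide) (by decide) (by decide)
      (fa 0) (fb 2) (fc 1) a0 b0 c0 ?_ ?_ ?_ ?_ hbt
    · rw [hp0, Lf_eq0 za1 za2]
    · rw [hp1, Lf_eq2 zb1 zb2]
    · rw [hp2, Lf_eq1 zc1 zc2]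
    · have h111 := hc3 1 1 1
      rw [za1, za2, zb1, zb2, zc1, zc2] at h111
      linear_combination h111
  · obtain ⟨z1, z2⟩ := kill1 k1
    obtain ⟨z3, z4⟩ := kill2 k2
    exact absurd (by rw [← hcubep, Lf_zero z3 z4 z2]; ring) hXne
  · obtain ⟨z1, z2⟩ := kill1 k1
    obtain ⟨z3, z4⟩ := kill2 k2
    exact absurd (by rw [← hcubep, Lf_zero z3 z4 z2]; ring) hXne
  · obtain ⟨z1, z2⟩ := kill0 k0
    obtain ⟨z3, z4⟩ := kill2 k2
    exact absurd (by rw [← hcubep, Lf_zero z3 z4 z2]; ring) hXne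
  · obtain ⟨za1, za2⟩ := kill1 k1
    obtain ⟨zb1, zb2⟩ := kill0 k0
    obtain ⟨zc1, zc2⟩ := kill2 k2
    refine goodCase φ 1 0 2 (by decide) (by decide) (by decide)
      (fa 1) (fb 0) (fc 2) a0 b0 c0 ?_ ?_ ?_ ?_ hbt
    · rw [hp0, Lf_eq1 za1 za2]
    · rw [hp1, Lf_eq0 zb1 zb2]
    · rw [hp2, Lf_eq2 zc1 zc2]
    · have h111 := hc3 1 1 1
      rw [za1, za2, zb1, zb2, zc1, zc2] at h111
      linear_combination h111
  · obtain ⟨z1, z2⟩ := kill0 k0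
    obtain ⟨z3, z4⟩ := kill1 k1
    exact absurd (by rw [← hcubep, Lf_zero z3 z1 z4]; ring) hXne
  · obtain ⟨z1, z2⟩ := kill0 k0
    obtain ⟨z3, z4⟩ := kill1 k1
    exact absurd (by rw [← hcubep, Lf_zero z3 z1 z4]; ring) hXne
  · obtain ⟨z1, z2⟩ := kill0 k0
    obtain ⟨z3, z4⟩ := kill1 k1
    exact absurd (by rw [← hcubep, Lf_zero z3 z1 z4]; ring) hXne
  · obtain ⟨za1, za2⟩ := kill2 k2
    obtain ⟨zb1, zb2⟩ := kill0 k0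
    obtain ⟨zc1, zc2⟩ := kill1 k1
    refine goodCase φ 2 0 1 (by decide) (by decide) (by decide)
      (fa 2) (fb 0) (fc 1) a0 b0 c0 ?_ ?_ ?_ ?_ hbt
    · rw [hp0, Lf_eq2 za1 za2]
    · rw [hp1, Lf_eq0 zb1 zb2]
    · rw [hp2, Lf_eq1 zc1 zc2]
    · have h111 := hc3 1 1 1
      rw [za1, za2, zb1, zb2, zc1, zc2] at h111
      linear_combination h111
  · obtain ⟨z1, z2⟩ := kill0 k0
    obtain ⟨z3, z4⟩ := kill2 k2
    exact absurd (by rw [← hcubep, Lf_zero z3 z4 z2]; ring) hXne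
  · obtain ⟨z1, z2⟩ := kill1 k1
    obtain ⟨z3, z4⟩ := kill2 k2
    exact absurd (by rw [← hcubep, Lf_zero z3 z4 z2]; ring) hXne
  · obtain ⟨z1, z2⟩ := kill1 k1
    obtain ⟨z3, z4⟩ := kill2 k2
    exact absurd (by rw [← hcubep, Lf_zero z3 z4 z2]; ring) hXne
  · obtain ⟨za1, za2⟩ := kill1 k1
    obtain ⟨zb1, zb2⟩ := kill2 k2
    obtain ⟨zc1, zc2⟩ := kill0 k0
    refine goodCase φ 1 2 0 (by decide) (by decide) (by decide)
      (fa 1) (fb 2) (fc 0) a0 b0 c0 ?_ ?_ ?_ ?_ hbt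
    · rw [hp0, Lf_eq1 za1 za2]
    · rw [hp1, Lf_eq2 zb1 zb2]
    · rw [hp2, Lf_eq0 zc1 zc2]
    · have h111 := hc3 1 1 1
      rw [za1, za2, zb1, zb2, zc1, zc2] at h111
      linear_combination h111
  · obtain ⟨z1, z2⟩ := kill0 k0
    obtain ⟨z3, z4⟩ := kill2 k2
    exact absurd (by rw [← hcubep, Lf_zero z3 z4 z2]; ring) hXne
  · obtain ⟨za1, za2⟩ := kill2 k2
    obtain ⟨zb1, zb2⟩ := kill1 k1
    obtain ⟨zc1, zc2⟩ := kill0 k0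
    refine goodCase φ 2 1 0 (by decide) (by decide) (by decide)
      (fa 2) (fb 1) (fc 0) a0 b0 c0 ?_ ?_ ?_ ?_ hbt
    · rw [hp0, Lf_eq2 za1 za2]
    · rw [hp1, Lf_eq1 zb1 zb2]
    · rw [hp2, Lf_eq0 zc1 zc2]
    · have h111 := hc3 1 1 1
      rw [za1, za2, zb1, zb2, zc1, zc2] at h111
      linear_combination h111
  · obtain ⟨z1, z2⟩ := kill1 k1
    obtain ⟨z3, z4⟩ := kill2 k2
    exact absurd (by rw [← hcubep, Lf_zero z3 z4 z2]; ring) hXne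
  · obtain ⟨z1, z2⟩ := kill0 k0
    obtain ⟨z3, z4⟩ := kill2 k2
    exact absurd (by rw [← hcubep, Lf_zero z3 z4 z2]; ring) hXne
  · obtain ⟨z1, z2⟩ := kill0 k0
    obtain ⟨z3, z4⟩ := kill1 k1
    exact absurd (by rw [← hcubep, Lf_zero z3 z1 z4]; ring) hXne
  · obtain ⟨z1, z2⟩ := kill0 k0
    obtain ⟨z3, z4⟩ := kill1 k1
    exact absurd (by rw [← hcubep, Lf_zero z3 z1 z4]; ring) hXne
  · obtain ⟨z1, z2⟩ := kill0 k0
    obtain ⟨z3, z4⟩ := kill1 k1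
    exact absurd (by rw [← hcubep, Lf_zero z3 z1 z4]; ring) hXne


lemma mul_apply (φ ψ : RingAut CharAlg) (t : CharAlg) : (φ * ψ) t = φ (ψ t) := rfl

lemma eq_of_X (φ ψ : RingAut CharAlg) (h : ∀ i, φ (X i) = ψ (X i)) : φ = ψ := by
  have hh : (φ : CharAlg →+* CharAlg) = (ψ : CharAlg →+* CharAlg) :=
    MvPolynomial.ringHom_ext (fun r => by
      show φ (C r) = ψ (C r)
      rw [phi_C, phi_C]) (fun i => h i)
  exact RingEquiv.ext (fun x => RingHom.congr_fun hh x)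

lemma max3 (d : Fin 3 → ℕ) : ∃ m : Fin 3, ∀ k : Fin 3, d k ≤ d m := by
  have h3 : ∀ k : Fin 3, k = 0 ∨ k = 1 ∨ k = 2 := by decide
  rcases le_total (d 0) (d 1) with h01 | h01 <;> rcases le_total (d 1) (d 2) with h12 | h12 <;>
    rcases le_total (d 0) (d 2) with h02 | h02
  · exact ⟨2, fun k => by rcases h3 k with rfl | rfl | rfl <;> omega⟩
  · exact ⟨2, fun k => by rcases h3 k with rfl | rfl | rfl <;> omega⟩
  · exact ⟨1, fun k => by rcases h3 k with rfl | rfl | rfl <;> omega⟩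
  · exact ⟨1, fun k => by rcases h3 k with rfl | rfl | rfl <;> omega⟩
  · exact ⟨2, fun k => by rcases h3 k with rfl | rfl | rfl <;> omega⟩
  · exact ⟨0, fun k => by rcases h3 k with rfl | rfl | rfl <;> omega⟩
  · exact ⟨1, fun k => by rcases h3 k with rfl | rfl | rfl <;> omega⟩
  · exact ⟨0, fun k => by rcases h3 k with rfl | rfl | rfl <;> omega⟩

end RelAutAux

open RelAutAux

/-- Every ring automorphism of `ℤ[x,y,z]` fixing `x² + y² + z² − xyz − 2` lies in the
subgroup generated by the Vieta involution, the coordinate permutations and the double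
sign changes. -/
theorem relAut_once_punctured_torus (φ : RingAut CharAlg)
    (h : φ boundaryTrace = boundaryTrace) :
    φ ∈ Subgroup.closure
      {ψ : RingAut CharAlg | IsVieta ψ ∨ IsCoordPerm ψ ∨ IsDoubleSign ψ} := by
  suffices Hmain : ∀ (N : ℕ) (φ : RingAut CharAlg), φ boundaryTrace = boundaryTrace →
      (φ (X 0)).totalDegree + (φ (X 1)).totalDegree + (φ (X 2)).totalDegree ≤ N →
      φ ∈ Subgroup.closure
        {ψ : RingAut CharAlg | IsVieta ψ ∨ IsCoordPerm ψ ∨ IsDoubleSign ψ} by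
    exact Hmain _ φ h le_rfl
  intro N
  induction N using Nat.strong_induction_on with
  | _ N IH =>
    intro φ hbt hdeg
    by_cases hsmall : ∀ i, (φ (X i)).totalDegree ≤ 1
    · obtain ⟨σ, e, he1, he2, he3⟩ := base φ hbt hsmall
      have heq : φ = coordPerm σ * signAut e he1 := by
        apply eq_of_X
        intro i
        rw [he3 i, mul_apply, signAut_apply_X, map_mul]
        simp [coordPerm_apply, rename_X, rename_C]
      rw [heq]
      exact mul_mem
        (Subgroup.subset_closure (Or.inr (Or.inl (isCoordPerm_coordPerm σ))))
        (Subgroup.subset_closure (Or.inr (Or.inr (isDoubleSign_signAut e he1 he2))))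
    · push_neg at hsmall
      obtain ⟨i, hi⟩ := hsmall
      obtain ⟨m, hm⟩ := max3 (fun k => (φ (X k)).totalDegree)
      have hm2 : 2 ≤ (φ (X m)).totalDegree := le_trans (by omega) (hm i)
      set ψ : RingAut CharAlg := φ * coordPerm (Equiv.swap m 2) with hψ
      have hψbt : ψ boundaryTrace = boundaryTrace := by
        rw [hψ, mul_apply, coordPerm_bt, hbt]
      have hψX : ∀ k, ψ (X k) = φ (X (Equiv.swap m 2 k)) := by
        intro k
        rw [hψ, mul_apply, coordPerm_apply, rename_X]
      have hψsum : (ψ (X 0)).totalDegree + (ψ (X 1)).totalDegree + (ψ (X 2)).totalDegree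
          = (φ (X 0)).totalDegree + (φ (X 1)).totalDegree + (φ (X 2)).totalDegree := by
        have hq := Equiv.sum_comp (Equiv.swap m 2)
          (fun k => (φ (X k)).totalDegree)
        rw [Fin.sum_univ_three, Fin.sum_univ_three] at hq
        rw [hψX 0, hψX 1, hψX 2]
        exact hq
      have hψ2 : (ψ (X 2)).totalDegree = (φ (X m)).totalDegree := by
        rw [hψX 2, Equiv.swap_apply_right]
      have hψmax : ∀ k, (ψ (X k)).totalDegree ≤ (ψ (X 2)).totalDegree := by
        intro k
        rw [hψ2, hψX k]
        exact hm _
      set χ : RingAut CharAlg := ψ * vieta with hχ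
      have hχbt : χ boundaryTrace = boundaryTrace := by
        rw [hχ, mul_apply, vieta_bt, hψbt]
      have hχ0 : χ (X 0) = ψ (X 0) := by
        rw [hχ, mul_apply, isVieta_vieta.1]
      have hχ1 : χ (X 1) = ψ (X 1) := by
        rw [hχ, mul_apply, isVieta_vieta.2.1]
      have hχ2 : χ (X 2) = ψ (X 0) * ψ (X 1) - ψ (X 2) := by
        rw [hχ, mul_apply, isVieta_vieta.2.2, map_sub, map_mul]
      have hdesc : (ψ (X 0) * ψ (X 1) - ψ (X 2)).totalDegree < (ψ (X 2)).totalDegree := by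
        apply descent
        · exact phi_ne_zero ψ _ (X_ne_zero 0)
        · exact phi_ne_zero ψ _ (X_ne_zero 1)
        · exact phi_ne_zero ψ _ (X_ne_zero 2)
        · rw [← hχ2]
          exact phi_ne_zero χ _ (X_ne_zero 2)
        · exact phi_X_deg_pos ψ 0
        · exact phi_X_deg_pos ψ 1
        · exact hψmax 0
        · exact hψmax 1
        · rw [hψ2]; exact hm2
        · exact Ederiv ψ hψbt
      have hlt : (χ (X 0)).totalDegree + (χ (X 1)).totalDegree + (χ (X 2)).totalDegree < N := by
        rw [hχ0, hχ1, hχ2]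
        omega
      have hχmem := IH _ hlt χ hχbt le_rfl
      have hτ : vieta ∈ Subgroup.closure
          {ψ : RingAut CharAlg | IsVieta ψ ∨ IsCoordPerm ψ ∨ IsDoubleSign ψ} :=
        Subgroup.subset_closure (Or.inl isVieta_vieta)
      have hρ : coordPerm (Equiv.swap m 2) ∈ Subgroup.closure
          {ψ : RingAut CharAlg | IsVieta ψ ∨ IsCoordPerm ψ ∨ IsDoubleSign ψ} :=
        Subgroup.subset_closure (Or.inr (Or.inl (isCoordPerm_coordPerm _)))
      have hψmem : ψ ∈ Subgroup.closure
          {ψ : RingAut CharAlg | IsVieta ψ ∨ IsCoordPerm ψ ∨ IsDoubleSign ψ} := by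
        have hh : ψ = χ * vieta⁻¹ := by rw [hχ]; group
        rw [hh]
        exact mul_mem hχmem (inv_mem hτ)
      have hh : φ = ψ * (coordPerm (Equiv.swap m 2))⁻¹ := by rw [hψ]; group
      rw [hh]
      exact mul_mem hψmem (inv_mem hρ)
end

section
/- For every element w of the free group F₂ on two generators a, b, there exists a polynomial P_w ∈ ℤ[x,y,z] such that for every commutative ring R and all matrices A, B ∈ SL(2,R), one has tr(ρ(w)) = P_w(tr(A), tr(B), tr(AB)), where ρ : F₂ → SL(2,R) is the group homomorphism determined by ρ(a) = A and ρ(b) = B. -/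
open Matrix MvPolynomial

universe u

section Helpers
variable {R : Type u} [CommRing R]

lemma vf_ch2 (M : Matrix (Fin 2) (Fin 2) R) :
    M * M = Matrix.trace M • M - Matrix.det M • 1 := by
  ext i j
  fin_cases i <;> fin_cases j <;>
    simp [Matrix.mul_apply, Fin.sum_univ_two, Matrix.trace, Matrix.diag,
      Matrix.det_fin_two, Matrix.one_apply, smul_eq_mul] <;> ring

lemma vf_polar (M N : Matrix (Fin 2) (Fin 2) R) :
    M * N + N * M = Matrix.trace M • N + Matrix.trace N • M +
      (Matrix.trace (M * N) - Matrix.trace M * Matrix.trace N) • 1 := by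
  ext i j
  fin_cases i <;> fin_cases j <;>
    simp [Matrix.mul_apply, Fin.sum_univ_two, Matrix.trace, Matrix.diag,
      Matrix.one_apply, smul_eq_mul] <;> ring

lemma vf_span_mul (x y z : R) (M N : Matrix (Fin 2) (Fin 2) R)
    (hMM : M * M = x • M - 1) (hNN : N * N = y • N - 1)
    (hNM : N * M = (z - x * y) • 1 + y • M + x • N - M * N)
    (c0 c1 c2 c3 d0 d1 d2 d3 : R) :
    (c0 • 1 + c1 • M + c2 • N + c3 • (M * N)) *
      (d0 • (1 : Matrix (Fin 2) (Fin 2) R) + d1 • M + d2 • N + d3 • (M * N)) =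
    (c0*d0 - c1*d1 + c2*d1*(z - x*y) - c2*d2 - c2*d3*x - c3*d1*y - c3*d3) • 1
    + (c0*d1 + c1*d0 + c1*d1*x + c2*d1*y + c2*d3 + c3*d1*z - c3*d2) • M
    + (c0*d2 + c2*d0 + c2*d1*x + c2*d2*y + c2*d3*z - c1*d3 + c3*d1) • N
    + (c0*d3 + c1*d2 + c1*d3*x - c2*d1 + c3*d0 + c3*d2*y + c3*d3*z) • (M * N) := by
  have hM_MN : M * (M * N) = x • (M * N) - N := by
    rw [← mul_assoc, hMM, sub_mul, smul_mul_assoc, one_mul]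
  have hMN_N : (M * N) * N = y • (M * N) - M := by
    rw [mul_assoc, hNN, mul_sub, mul_smul_comm, mul_one]
  have hN_MN : N * (M * N) = M + z • N - x • 1 := by
    rw [← mul_assoc, hNM, sub_mul, add_mul, add_mul, smul_mul_assoc, smul_mul_assoc,
      smul_mul_assoc, one_mul, hNN, hMN_N]
    module
  have hMN_M : (M * N) * M = z • M + N - y • 1 := by
    rw [mul_assoc, hNM, mul_sub, mul_add, mul_add, mul_smul_comm, mul_smul_comm,
      mul_smul_comm, mul_one, hMM, hM_MN]
    module
  have hMN_MN : (M * N) * (M * N) = z • (M * N) - 1 := by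
    rw [← mul_assoc, hMN_M, sub_mul, add_mul, smul_mul_assoc, smul_mul_assoc, one_mul,
      hNN]
    module
  simp only [mul_add, add_mul, smul_mul_assoc, mul_smul_comm, one_mul, mul_one]
  rw [hMM, hNN, hNM, hM_MN, hN_MN, hMN_M, hMN_N, hMN_MN]
  module

end Helpers

def vfvec {R : Type u} [CommRing R] (A B : Matrix.SpecialLinearGroup (Fin 2) R) :
    Fin 3 → R :=
  ![Matrix.trace (A : Matrix (Fin 2) (Fin 2) R),
    Matrix.trace (B : Matrix (Fin 2) (Fin 2) R),
    Matrix.trace ((A : Matrix (Fin 2) (Fin 2) R) * (B : Matrix (Fin 2) (Fin 2) R))]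

theorem vf_span (w : FreeGroup (Fin 2)) :
    ∃ p0 p1 p2 p3 : MvPolynomial (Fin 3) ℤ,
      ∀ (R : Type u) [CommRing R] (A B : Matrix.SpecialLinearGroup (Fin 2) R)
        (ρ : FreeGroup (Fin 2) →* Matrix.SpecialLinearGroup (Fin 2) R),
        ρ (FreeGroup.of 0) = A → ρ (FreeGroup.of 1) = B →
        ((ρ w : Matrix.SpecialLinearGroup (Fin 2) R) : Matrix (Fin 2) (Fin 2) R) =
          MvPolynomial.aeval (vfvec A B) p0 • 1 +
          MvPolynomial.aeval (vfvec A B) p1 • (A : Matrix (Fin 2) (Fin 2) R) +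
          MvPolynomial.aeval (vfvec A B) p2 • (B : Matrix (Fin 2) (Fin 2) R) +
          MvPolynomial.aeval (vfvec A B) p3 •
            ((A : Matrix (Fin 2) (Fin 2) R) * (B : Matrix (Fin 2) (Fin 2) R)) := by
  induction w using FreeGroup.induction_on with
  | C1 =>
    refine ⟨1, 0, 0, 0, ?_⟩
    intro R _ A B ρ hA hB
    simp
  | of i =>
    fin_cases i
    · refine ⟨0, 1, 0, 0, ?_⟩
      intro R _ A B ρ hA hB
      show ((ρ (FreeGroup.of 0) : Matrix.SpecialLinearGroup (Fin 2) R) :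
        Matrix (Fin 2) (Fin 2) R) = _
      rw [hA]
      simp
    · refine ⟨0, 0, 1, 0, ?_⟩
      intro R _ A B ρ hA hB
      show ((ρ (FreeGroup.of 1) : Matrix.SpecialLinearGroup (Fin 2) R) :
        Matrix (Fin 2) (Fin 2) R) = _
      rw [hB]
      simp
  | inv_of i _ =>
    fin_cases i
    · refine ⟨MvPolynomial.X 0, -1, 0, 0, ?_⟩
      intro R _ A B ρ hA hB
      show ((ρ ((FreeGroup.of 0)⁻¹) : Matrix.SpecialLinearGroup (Fin 2) R) :
        Matrix (Fin 2) (Fin 2) R) = _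
      rw [map_inv, hA]
      have hdet : Matrix.det (A : Matrix (Fin 2) (Fin 2) R) = 1 := A.prop
      have hMM : (A : Matrix (Fin 2) (Fin 2) R) * A =
          Matrix.trace (A : Matrix (Fin 2) (Fin 2) R) • (A : Matrix (Fin 2) (Fin 2) R) - 1 := by
        rw [vf_ch2, hdet, one_smul]
      have h1 : (A : Matrix (Fin 2) (Fin 2) R) * ((A⁻¹ : Matrix.SpecialLinearGroup (Fin 2) R) :
          Matrix (Fin 2) (Fin 2) R) = 1 := by
        rw [← Matrix.SpecialLinearGroup.coe_mul, mul_inv_cancel,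
          Matrix.SpecialLinearGroup.coe_one]
      have h2 : ((A⁻¹ : Matrix.SpecialLinearGroup (Fin 2) R) : Matrix (Fin 2) (Fin 2) R) =
          Matrix.trace (A : Matrix (Fin 2) (Fin 2) R) • 1 - A := by
        have h3 := congrArg (· * ((A⁻¹ : Matrix.SpecialLinearGroup (Fin 2) R) :
          Matrix (Fin 2) (Fin 2) R)) hMM
        simp only [mul_assoc, h1, mul_one, sub_mul, smul_mul_assoc, one_mul] at h3
        rw [eq_sub_iff_add_eq] at h3 ⊢
        rw [add_comm]
        exact h3
      rw [h2]
      simp [vfvec]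
      module
    · refine ⟨MvPolynomial.X 1, 0, -1, 0, ?_⟩
      intro R _ A B ρ hA hB
      show ((ρ ((FreeGroup.of 1)⁻¹) : Matrix.SpecialLinearGroup (Fin 2) R) :
        Matrix (Fin 2) (Fin 2) R) = _
      rw [map_inv, hB]
      have hdet : Matrix.det (B : Matrix (Fin 2) (Fin 2) R) = 1 := B.prop
      have hMM : (B : Matrix (Fin 2) (Fin 2) R) * B =
          Matrix.trace (B : Matrix (Fin 2) (Fin 2) R) • (B : Matrix (Fin 2) (Fin 2) R) - 1 := by
        rw [vf_ch2, hdet, one_smul]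
      have h1 : (B : Matrix (Fin 2) (Fin 2) R) * ((B⁻¹ : Matrix.SpecialLinearGroup (Fin 2) R) :
          Matrix (Fin 2) (Fin 2) R) = 1 := by
        rw [← Matrix.SpecialLinearGroup.coe_mul, mul_inv_cancel,
          Matrix.SpecialLinearGroup.coe_one]
      have h2 : ((B⁻¹ : Matrix.SpecialLinearGroup (Fin 2) R) : Matrix (Fin 2) (Fin 2) R) =
          Matrix.trace (B : Matrix (Fin 2) (Fin 2) R) • 1 - B := by
        have h3 := congrArg (· * ((B⁻¹ : Matrix.SpecialLinearGroup (Fin 2) R) :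
          Matrix (Fin 2) (Fin 2) R)) hMM
        simp only [mul_assoc, h1, mul_one, sub_mul, smul_mul_assoc, one_mul] at h3
        rw [eq_sub_iff_add_eq] at h3 ⊢
        rw [add_comm]
        exact h3
      rw [h2]
      simp [vfvec]
      module
  | mul u v hu hv =>
    obtain ⟨p0, p1, p2, p3, hp⟩ := hu
    obtain ⟨q0, q1, q2, q3, hq⟩ := hv
    refine ⟨p0*q0 - p1*q1 + p2*q1*(MvPolynomial.X 2 - MvPolynomial.X 0 * MvPolynomial.X 1)
        - p2*q2 - p2*q3*MvPolynomial.X 0 - p3*q1*MvPolynomial.X 1 - p3*q3,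
      p0*q1 + p1*q0 + p1*q1*MvPolynomial.X 0 + p2*q1*MvPolynomial.X 1 + p2*q3
        + p3*q1*MvPolynomial.X 2 - p3*q2,
      p0*q2 + p2*q0 + p2*q1*MvPolynomial.X 0 + p2*q2*MvPolynomial.X 1 + p2*q3*MvPolynomial.X 2
        - p1*q3 + p3*q1,
      p0*q3 + p1*q2 + p1*q3*MvPolynomial.X 0 - p2*q1 + p3*q0 + p3*q2*MvPolynomial.X 1
        + p3*q3*MvPolynomial.X 2, ?_⟩
    intro R _ A B ρ hA hB
    set M : Matrix (Fin 2) (Fin 2) R := (A : Matrix (Fin 2) (Fin 2) R) with hM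
    set N : Matrix (Fin 2) (Fin 2) R := (B : Matrix (Fin 2) (Fin 2) R) with hN
    have hMM : M * M = Matrix.trace M • M - 1 := by
      rw [vf_ch2, show Matrix.det M = 1 from A.prop, one_smul]
    have hNN : N * N = Matrix.trace N • N - 1 := by
      rw [vf_ch2, show Matrix.det N = 1 from B.prop, one_smul]
    have hNM : N * M = (Matrix.trace (M * N) - Matrix.trace M * Matrix.trace N) • 1
        + Matrix.trace N • M + Matrix.trace M • N - M * N := by
      have h := vf_polar M N
      have h2 : N * M = (M * N + N * M) - M * N := by abel
      rw [h] at h2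
      rw [h2]
      module
    rw [_root_.map_mul, Matrix.SpecialLinearGroup.coe_mul, hp R A B ρ hA hB, hq R A B ρ hA hB,
      vf_span_mul (Matrix.trace M) (Matrix.trace N) (Matrix.trace (M * N)) M N hMM hNN hNM]
    simp only [vfvec, map_add, map_sub, _root_.map_mul, MvPolynomial.aeval_X,
      Matrix.cons_val_zero, Matrix.cons_val_one, Matrix.head_cons, Matrix.cons_val_two,
      Matrix.tail_cons, ← hM, ← hN]

/-- Vogt–Fricke: for every word `w` in the free group on two generators `a, b` there is a
polynomial `P_w ∈ ℤ[x,y,z]` such that for every commutative ring `R` and all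
`A, B ∈ SL(2,R)`, `tr(ρ(w)) = P_w(tr A, tr B, tr AB)` where `ρ : F₂ → SL(2,R)` is the
homomorphism with `ρ(a) = A`, `ρ(b) = B`. -/
theorem exists_trace_polynomial (w : FreeGroup (Fin 2)) :
    ∃ P : MvPolynomial (Fin 3) ℤ,
      ∀ (R : Type u) [CommRing R] (A B : Matrix.SpecialLinearGroup (Fin 2) R)
        (ρ : FreeGroup (Fin 2) →* Matrix.SpecialLinearGroup (Fin 2) R),
        ρ (FreeGroup.of 0) = A → ρ (FreeGroup.of 1) = B →
        Matrix.trace ((ρ w : Matrix.SpecialLinearGroup (Fin 2) R) :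
            Matrix (Fin 2) (Fin 2) R) =
          MvPolynomial.aeval
            ![Matrix.trace (A : Matrix (Fin 2) (Fin 2) R),
              Matrix.trace (B : Matrix (Fin 2) (Fin 2) R),
              Matrix.trace ((A * B : Matrix.SpecialLinearGroup (Fin 2) R) :
                Matrix (Fin 2) (Fin 2) R)] P := by
  obtain ⟨p0, p1, p2, p3, hp⟩ := vf_span.{u} w
  refine ⟨MvPolynomial.C 2 * p0 + MvPolynomial.X 0 * p1 + MvPolynomial.X 1 * p2 +
    MvPolynomial.X 2 * p3, ?_⟩
  intro R _ A B ρ hA hB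
  rw [hp R A B ρ hA hB]
  simp only [vfvec, Matrix.trace_add, Matrix.trace_smul, Matrix.trace_one, smul_eq_mul,
    Matrix.SpecialLinearGroup.coe_mul, map_add, _root_.map_mul, MvPolynomial.aeval_X,
    MvPolynomial.aeval_C, map_ofNat, Matrix.cons_val_zero, Matrix.cons_val_one, Matrix.head_cons,
    Matrix.cons_val_two, Matrix.tail_cons, Fintype.card_fin]
  push_cast
  ring
end

section
/- For all complex numbers x, y, z there exist matrices A, B ∈ SL(2,ℂ) such that tr(A) = x, tr(B) = y, and tr(AB) = z. -/
open Matrix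

/-- Surjectivity of the trace coordinates on the `SL(2,ℂ)`-character variety of the
once-punctured torus: every `(x, y, z) ∈ ℂ³` is `(tr A, tr B, tr AB)` for some
`A, B ∈ SL(2,ℂ)`. -/
theorem sl2C_trace_coordinates_surjective (x y z : ℂ) :
    ∃ A B : Matrix.SpecialLinearGroup (Fin 2) ℂ,
      Matrix.trace (A : Matrix (Fin 2) (Fin 2) ℂ) = x ∧
      Matrix.trace (B : Matrix (Fin 2) (Fin 2) ℂ) = y ∧
      Matrix.trace ((A * B : Matrix.SpecialLinearGroup (Fin 2) ℂ) :
        Matrix (Fin 2) (Fin 2) ℂ) = z := by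
  obtain ⟨s, hs⟩ : ∃ s : ℂ, s ^ 2 = z ^ 2 - 4 :=
    IsAlgClosed.exists_pow_nat_eq (z ^ 2 - 4) two_pos
  set b : ℂ := (z + s) / 2
  set c : ℂ := (s - z) / 2
  have hbc : b * c = -1 := by
    field_simp [b, c]
    linear_combination (1/4) * hs
  refine ⟨⟨!![x, -1; 1, 0], by simp [Matrix.det_fin_two_of]⟩,
    ⟨!![0, b; c, y], by simp [Matrix.det_fin_two_of, hbc]⟩, ?_, ?_, ?_⟩
  · simp [Matrix.trace_fin_two_of]
  · simp [Matrix.trace_fin_two_of]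
  · show Matrix.trace (!![x, -1; 1, 0] * !![0, b; c, y]) = z
    rw [show (!![x, -1; 1, 0] * !![0, b; c, y]) =
      !![x * 0 + (-1) * c, x * b + (-1) * y; 1 * 0 + 0 * c, 1 * b + 0 * y] by
        ext i j; fin_cases i <;> fin_cases j <;>
          simp [Matrix.mul_apply, Fin.sum_univ_two]]
    simp [Matrix.trace_fin_two_of, b, c]
    ring
end

section
/- If P is a polynomial in three variables over ℂ such that P(tr(A), tr(B), tr(AB)) = 0 for all matrices A, B ∈ SL(2,ℂ), then P is the zero polynomial. -/
open Matrix

lemma exists_q (z : ℂ) : ∃ q : ℂ, q ≠ 0 ∧ q ^ 2 - z * q + 1 = 0 := by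
  obtain ⟨q, hq⟩ := Complex.exists_root (f := Polynomial.X ^ 2 - Polynomial.C z * Polynomial.X + 1)
    (by
      have h2 : (Polynomial.X ^ 2 - Polynomial.C z * Polynomial.X + 1 :
          Polynomial ℂ).degree = 2 := by
        compute_degree!
      rw [h2]; norm_num)
  have hq' : q ^ 2 - z * q + 1 = 0 := by
    simpa [Polynomial.IsRoot] using hq
  refine ⟨q, ?_, hq'⟩
  rintro rfl
  simp at hq'

/-- Algebraic independence of the trace coordinates: a polynomial `P ∈ ℂ[x,y,z]` that
vanishes on `(tr A, tr B, tr AB)` for all `A, B ∈ SL(2,ℂ)` is the zero polynomial. -/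
theorem trace_coordinates_algebraically_independent (P : MvPolynomial (Fin 3) ℂ)
    (h : ∀ A B : Matrix.SpecialLinearGroup (Fin 2) ℂ,
      MvPolynomial.eval
        ![Matrix.trace (A : Matrix (Fin 2) (Fin 2) ℂ),
          Matrix.trace (B : Matrix (Fin 2) (Fin 2) ℂ),
          Matrix.trace ((A * B : Matrix.SpecialLinearGroup (Fin 2) ℂ) :
            Matrix (Fin 2) (Fin 2) ℂ)] P = 0) :
    P = 0 := by
  have key : ∀ v : Fin 3 → ℂ, MvPolynomial.eval v P = 0 := by
    intro v
    obtain ⟨q, hq0, hq⟩ := exists_q (v 2)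
    set A : Matrix.SpecialLinearGroup (Fin 2) ℂ :=
      ⟨!![v 0, -1; 1, 0], by simp [Matrix.det_fin_two_of]⟩
    set B : Matrix.SpecialLinearGroup (Fin 2) ℂ :=
      ⟨!![0, q; -q⁻¹, v 1], by
        simp [Matrix.det_fin_two_of, mul_inv_cancel₀ hq0]⟩
    have hA : Matrix.trace (A : Matrix (Fin 2) (Fin 2) ℂ) = v 0 := by
      simp [A, Matrix.trace_fin_two_of]
    have hB : Matrix.trace (B : Matrix (Fin 2) (Fin 2) ℂ) = v 1 := by
      simp [B, Matrix.trace_fin_two_of]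
    have hAB : Matrix.trace ((A * B : Matrix.SpecialLinearGroup (Fin 2) ℂ) :
        Matrix (Fin 2) (Fin 2) ℂ) = v 2 := by
      have : ((A * B : Matrix.SpecialLinearGroup (Fin 2) ℂ) :
          Matrix (Fin 2) (Fin 2) ℂ) = (A : Matrix (Fin 2) (Fin 2) ℂ) * B := rfl
      rw [this]
      simp only [A, B]
      rw [show (!![v 0, -1; 1, 0] * !![0, q; -q⁻¹, v 1] : Matrix (Fin 2) (Fin 2) ℂ)
          = !![q⁻¹, v 0 * q - v 1; 0, q] by
        ext i j
        fin_cases i <;> fin_cases j <;>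
          simp [Matrix.mul_apply, Fin.sum_univ_two] <;> ring]
      rw [Matrix.trace_fin_two_of]
      field_simp
      linear_combination hq
    have := h A B
    rw [hA, hB, hAB] at this
    have hv : ![v 0, v 1, v 2] = v := by
      ext i; fin_cases i <;> rfl
    rwa [hv] at this
  have : ∀ v : Fin 3 → ℂ, MvPolynomial.eval v P = MvPolynomial.eval v (0 : MvPolynomial (Fin 3) ℂ) := by
    simp [key]
  exact MvPolynomial.funext this
end
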